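/- Let (X,d_X) and (Y,d_Y) be V-categories and i : (Y,d_Y) → (X,d_X) an isometry (d_Y(y₁,y₂) = d_X(i(y₁), i(y₂)) for all y₁,y₂). Then every non-expansive map f : (Y,d_Y) → (V,d_V) factors as f = g ∘ i for some non-expansive g : (X,d_X) → (V,d_V). -/

import Mathlib

open IsQuantale

variable {V : Type*}

/-- Residuation (internal hom) of a quantale. -/
def dres [CommMonoid V] [CompleteLattice V] (a c : V) : V := sSup {u | u * a ≤ c}

lemma le_dres [CommMonoid V] [CompleteLattice V] {u a c : V} (h : u * a ≤ c) :
    u ≤ dres a c := le_sSup h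

lemma dres_mul_le [CommMonoid V] [CompleteLattice V] [IsQuantale V] (a c : V) :
    dres a c * a ≤ c := by
  rw [dres, sSup_mul_distrib]
  exact iSup₂_le fun u hu => hu

/-- Non-expansive maps into `(V, dres)` extend along isometries of V-categories. -/
theorem stmt12 [CommMonoid V] [CompleteLattice V] [IsQuantale V]
    {X Y : Type*} (dX : X → X → V) (dY : Y → Y → V)
    (hXrefl : ∀ x, (1 : V) ≤ dX x x)
    (hXtrans : ∀ x y z, dX x y * dX y z ≤ dX x z)
    (hYrefl : ∀ y, (1 : V) ≤ dY y y)
    (hYtrans : ∀ x y z, dY x y * dY y z ≤ dY x z)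
    (i : Y → X) (hiso : ∀ y₁ y₂, dY y₁ y₂ = dX (i y₁) (i y₂))
    (f : Y → V) (hf : ∀ y₁ y₂, dY y₁ y₂ ≤ dres (f y₁) (f y₂)) :
    ∃ g : X → V, (∀ x₁ x₂, dX x₁ x₂ ≤ dres (g x₁) (g x₂)) ∧ ∀ y, f y = g (i y) := by
  refine ⟨fun x => ⨆ y, f y * dX (i y) x, ?_, ?_⟩
  · intro x₁ x₂
    apply le_dres
    show dX x₁ x₂ * (⨆ y, f y * dX (i y) x₁) ≤ ⨆ y, f y * dX (i y) x₂
    rw [Quantale.mul_iSup_distrib]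
    refine iSup_le fun y => ?_
    calc dX x₁ x₂ * (f y * dX (i y) x₁) = f y * (dX (i y) x₁ * dX x₁ x₂) := by rw [mul_comm, mul_assoc]
      _ ≤ f y * dX (i y) x₂ := mul_le_mul_right (hXtrans _ _ _) _
      _ ≤ ⨆ y, f y * dX (i y) x₂ := le_iSup (fun y => f y * dX (i y) x₂) y
  · intro y
    apply le_antisymm
    · calc f y = f y * 1 := (mul_one _).symm
        _ ≤ f y * dX (i y) (i y) := mul_le_mul_right (hXrefl _) _
        _ ≤ ⨆ y', f y' * dX (i y') (i y) := le_iSup (fun y' => f y' * dX (i y') (i y)) y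
    · refine iSup_le fun y' => ?_
      calc f y' * dX (i y') (i y) = f y' * dY y' y := by rw [hiso]
        _ ≤ f y' * dres (f y') (f y) := mul_le_mul_right (hf _ _) _
        _ = dres (f y') (f y) * f y' := mul_comm _ _
        _ ≤ f y := dres_mul_le _ _
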